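/- Let f* be an optimal randomized prediction rule for the mutual-information-constrained fair classification problem: f* satisfies I(Ŷ; S) ≤ ε (mutual information in nats) and its risk E[1{Ŷ ≠ Y}] is minimal among all randomized prediction rules Q_{Ŷ|X,S} satisfying I(Ŷ; S) ≤ ε. Suppose Y = h(X, S) for a deterministic function h : 𝒳 × 𝒮 → 𝒴, and s_max ∈ 𝒮 satisfies P_S(s_max) = 1/2 + δ for some δ > 0. Then for the prediction variable Ŷ induced by f*: E_{s∼P_S}[ TV(P_{Ŷ|S=s}, P_{Y|S=s_max}) ] ≤ (1/2 + 1/(4δ)) · √(2ε). -/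

import Mathlib

open Finset
set_option linter.unusedSectionVars false
set_option maxHeartbeats 1000000

noncomputable section

variable {𝒳 𝒴 𝒮 : Type*} [Fintype 𝒳] [Fintype 𝒴] [Fintype 𝒮] [DecidableEq 𝒴]

/-- Total variation distance between two finitely supported distributions on `𝒴`,
`TV(p, q) = (1/2) ∑ y, |p y - q y|`. -/
def TV (p q : 𝒴 → ℝ) : ℝ := (1 / 2) * ∑ y, |p y - q y|

/-- Marginal distribution of the sensitive attribute `S` under the joint `P` of `(X, Y, S)`. -/
def margS (P : 𝒳 → 𝒴 → 𝒮 → ℝ) (s : 𝒮) : ℝ := ∑ x, ∑ y, P x y s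

/-- Conditional distribution of the label `Y` given `S = s`. -/
def condYS (P : 𝒳 → 𝒴 → 𝒮 → ℝ) (s : 𝒮) (y : 𝒴) : ℝ := (∑ x, P x y s) / margS P s

/-- A randomized prediction rule `Q`: for every `(x, s)`, `Q x s` is a probability
distribution on labels. -/
def IsRule (Q : 𝒳 → 𝒮 → 𝒴 → ℝ) : Prop :=
  (∀ x s y, 0 ≤ Q x s y) ∧ ∀ x s, ∑ y, Q x s y = 1

/-- The risk `E[1{Ŷ ≠ Y}]` of the rule `Q` under the joint distribution induced by `P` and
`Q` (in which `Ŷ` is conditionally independent of `Y` given `(X, S)`). -/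
def risk (P : 𝒳 → 𝒴 → 𝒮 → ℝ) (Q : 𝒳 → 𝒮 → 𝒴 → ℝ) : ℝ :=
  ∑ x, ∑ y, ∑ s, ∑ yh, P x y s * Q x s yh * (if yh = y then (0 : ℝ) else 1)

/-- Joint distribution of `(Ŷ, S)` induced by `P` and the rule `Q`. -/
def jointYhatS (P : 𝒳 → 𝒴 → 𝒮 → ℝ) (Q : 𝒳 → 𝒮 → 𝒴 → ℝ) (yh : 𝒴) (s : 𝒮) : ℝ :=
  ∑ x, ∑ y, P x y s * Q x s yh

/-- Marginal distribution of the prediction `Ŷ`. -/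
def margYhat (P : 𝒳 → 𝒴 → 𝒮 → ℝ) (Q : 𝒳 → 𝒮 → 𝒴 → ℝ) (yh : 𝒴) : ℝ :=
  ∑ s, jointYhatS P Q yh s

/-- Conditional distribution of the prediction `Ŷ` given `S = s`. -/
def condYhatS (P : 𝒳 → 𝒴 → 𝒮 → ℝ) (Q : 𝒳 → 𝒮 → 𝒴 → ℝ) (s : 𝒮) (yh : 𝒴) : ℝ :=
  jointYhatS P Q yh s / margS P s

/-- Mutual information (in nats) between the prediction `Ŷ` and `S`:
`I(Ŷ; S) = ∑_{y,s} P(Ŷ=y, S=s) ln( P(Ŷ=y, S=s) / (P(Ŷ=y) P(S=s)) )`. -/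
def MI (P : 𝒳 → 𝒴 → 𝒮 → ℝ) (Q : 𝒳 → 𝒮 → 𝒴 → ℝ) : ℝ :=
  ∑ yh, ∑ s, jointYhatS P Q yh s *
    Real.log (jointYhatS P Q yh s / (margYhat P Q yh * margS P s))

/-- `log t ≥ 2(t-1)/(t+1)` for `t ≥ 1`. -/
lemma log_ge_aux {t : ℝ} (ht : 1 ≤ t) : 2 * (t - 1) / (t + 1) ≤ Real.log t := by
  have key : MonotoneOn (fun x : ℝ => Real.log x + 4 / (x + 1)) (Set.Ici 1) := by
    apply monotoneOn_of_hasDerivWithinAt_nonneg (convex_Ici 1)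
      (f' := fun x => 1 / x + (-1 / (x + 1) ^ 2) * 4)
    · intro x hx
      have hx0 : (0:ℝ) < x := lt_of_lt_of_le one_pos hx
      exact ContinuousWithinAt.add
        ((Real.continuousAt_log hx0.ne').continuousWithinAt)
        (ContinuousWithinAt.div continuousWithinAt_const
          (continuousWithinAt_id.add continuousWithinAt_const) (by positivity))
    · intro x hx
      rw [interior_Ici] at hx
      have hx0 : (0:ℝ) < x := lt_trans one_pos hx
      have h1 : HasDerivAt (fun x : ℝ => Real.log x + 4 / (x + 1))
          (1 / x + (-1 / (x + 1) ^ 2) * 4) x := by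
        have hl : HasDerivAt Real.log (1 / x) x := by
          simpa [one_div] using Real.hasDerivAt_log hx0.ne'
        have hi : HasDerivAt (fun x : ℝ => x + 1) 1 x := (hasDerivAt_id x).add_const 1
        have hinv : HasDerivAt (fun x : ℝ => (x + 1)⁻¹) (-1 / (x + 1) ^ 2) x := by
          exact hi.inv (by positivity)
        exact (hl.add (hinv.mul_const 4)).congr_of_eventuallyEq
          (Filter.Eventually.of_forall fun y => by simp [div_eq_mul_inv, mul_comm])
      exact h1.hasDerivWithinAt
    · intro x hx
      rw [interior_Ici] at hx
      have hx0 : (0:ℝ) < x := lt_trans one_pos hx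
      have : 1 / x + (-1 / (x + 1) ^ 2) * 4 = (x - 1) ^ 2 / (x * (x + 1) ^ 2) := by
        field_simp; ring
      rw [this]; positivity
  have h2 := key (Set.self_mem_Ici) (Set.mem_Ici.2 ht) ht
  simp only [Real.log_one] at h2
  have ht1 : (0:ℝ) < t + 1 := by linarith
  rw [div_le_iff₀ ht1]
  have h3 : 4 / (t + 1) * (t + 1) = 4 := by field_simp
  have h4 : 4 / (1 + 1) = (2:ℝ) := by norm_num
  nlinarith [mul_le_mul_of_nonneg_right h2 ht1.le]

/-- `log x ≤ 2(x-1)/(x+1)` for `0 < x ≤ 1`. -/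
lemma log_le_aux {x : ℝ} (hx0 : 0 < x) (hx1 : x ≤ 1) : Real.log x ≤ 2 * (x - 1) / (x + 1) := by
  have h := log_ge_aux (t := 1 / x) (by rw [le_div_iff₀ hx0]; linarith)
  rw [Real.log_div one_ne_zero hx0.ne', Real.log_one] at h
  have hx1' : (0:ℝ) < x + 1 := by linarith
  have he : 2 * (1 / x - 1) / (1 / x + 1) = 2 * (1 - x) / (x + 1) := by
    rw [div_eq_div_iff (by positivity) (by positivity)]
    field_simp
    ring_nf
    try tauto
  rw [he] at h
  have : Real.log x ≤ -(2 * (1 - x) / (x + 1)) := by linarith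
  calc Real.log x ≤ -(2 * (1 - x) / (x + 1)) := this
    _ = 2 * (x - 1) / (x + 1) := by ring

/-- continuity helper -/
lemma contH : ∀ D : Set ℝ, (∀ y ∈ D, (0:ℝ) < y) → ContinuousOn
    (fun x : ℝ => 2 * (x + 2) * (x * Real.log x - x + 1) - 3 * (x - 1) ^ 2) D := by
  intro D hD
  apply ContinuousOn.sub
  · apply ContinuousOn.mul
    · fun_prop
    · apply ContinuousOn.add
      · apply ContinuousOn.sub
        · exact ContinuousOn.mul continuousOn_id
            (Real.continuousOn_log.mono (fun y hy => (hD y hy).ne'))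
        · fun_prop
      · fun_prop
  · fun_prop

lemma derivH {x : ℝ} (hx : 0 < x) :
    HasDerivAt (fun x : ℝ => 2 * (x + 2) * (x * Real.log x - x + 1) - 3 * (x - 1) ^ 2)
      (4 * ((x + 1) * Real.log x - 2 * (x - 1))) x := by
  have h1 : HasDerivAt (fun x : ℝ => x * Real.log x) (Real.log x + 1) x :=
    Real.hasDerivAt_mul_log hx.ne'
  have h2 : HasDerivAt (fun x : ℝ => x * Real.log x - x + 1) (Real.log x + 1 - 1) x :=
    (h1.sub (hasDerivAt_id x)).add_const 1
  have h3 : HasDerivAt (fun x : ℝ => 2 * (x + 2)) 2 x := by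
    simpa using ((hasDerivAt_id x).add_const 2).const_mul 2
  have h4 := h3.mul h2
  have h5 : HasDerivAt (fun x : ℝ => 3 * (x - 1) ^ 2) (3 * (2 * (x - 1))) x := by
    have := (((hasDerivAt_id x).sub_const 1).pow 2).const_mul 3
    simpa using this
  have h6 := h4.sub h5
  exact h6.congr_deriv (by ring)

/-- The key inequality: `2(x+2)(x log x - x + 1) ≥ 3(x-1)²` for `x > 0`. -/
lemma H_nonneg {x : ℝ} (hx : 0 < x) :
    3 * (x - 1) ^ 2 ≤ 2 * (x + 2) * (x * Real.log x - x + 1) := by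
  set H : ℝ → ℝ := fun x => 2 * (x + 2) * (x * Real.log x - x + 1) - 3 * (x - 1) ^ 2 with hH
  have hH1 : H 1 = 0 := by simp [hH]
  rcases le_or_gt 1 x with hx1 | hx1
  · have mono : MonotoneOn H (Set.Ici 1) := by
      apply monotoneOn_of_hasDerivWithinAt_nonneg (convex_Ici 1)
        (f' := fun x => 4 * ((x + 1) * Real.log x - 2 * (x - 1)))
      · exact contH _ (fun y hy => lt_of_lt_of_le one_pos hy)
      · intro y hy
        rw [interior_Ici] at hy
        exact (derivH (lt_trans one_pos hy)).hasDerivWithinAt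
      · intro y hy
        rw [interior_Ici, Set.mem_Ioi] at hy
        have hy1 : (0:ℝ) < y + 1 := by linarith
        have := log_ge_aux hy.le
        rw [div_le_iff₀ hy1] at this
        nlinarith [this, hy]
    have := mono Set.self_mem_Ici (Set.mem_Ici.2 hx1) hx1
    rw [hH1] at this
    simpa [hH] using this
  · have anti : AntitoneOn H (Set.Icc x 1) := by
      apply antitoneOn_of_hasDerivWithinAt_nonpos (convex_Icc x 1)
        (f' := fun x => 4 * ((x + 1) * Real.log x - 2 * (x - 1)))
      · exact contH _ (fun y hy => lt_of_lt_of_le hx hy.1)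
      · intro y hy
        rw [interior_Icc] at hy
        exact (derivH (lt_trans hx hy.1)).hasDerivWithinAt
      · intro y hy
        rw [interior_Icc, Set.mem_Ioo] at hy
        obtain ⟨hya, hyb⟩ := hy
        have hy0 : (0:ℝ) < y := lt_trans hx hya
        have hy1 : (0:ℝ) < y + 1 := by linarith
        have := log_le_aux hy0 hyb.le
        rw [le_div_iff₀ hy1] at this
        nlinarith [this, hy0, hyb]
    have := anti (Set.mem_Icc.2 ⟨le_refl x, hx1.le⟩) (Set.mem_Icc.2 ⟨hx1.le, le_refl 1⟩) hx1.le
    rw [hH1] at this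
    simpa [hH] using this

/-- Pointwise Pinsker bound: for `p, r ≥ 0` with `r = 0 → p = 0`,
`p log(p/r) - p + r ≥ 3(p-r)²/(2(p+2r))`. -/
lemma pointwise_pinsker {p r : ℝ} (hp : 0 ≤ p) (hr : 0 ≤ r) (hac : r = 0 → p = 0) :
    3 * (p - r) ^ 2 / (2 * (p + 2 * r)) ≤ p * Real.log (p / r) - p + r := by
  rcases eq_or_lt_of_le hr with hr0 | hr0
  · have hp0 : p = 0 := hac hr0.symm
    simp [hp0, ← hr0]
  rcases eq_or_lt_of_le hp with hp0 | hp0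
  · rw [← hp0]
    have e : 3 * (0 - r) ^ 2 / (2 * (0 + 2 * r)) = 3 / 4 * r := by
      field_simp
      ring
    rw [e]
    simp
    linarith
  · have key := H_nonneg (x := p / r) (by positivity)
    have e1 : p / r * Real.log (p / r) - p / r + 1 = (p * Real.log (p / r) - p + r) / r := by
      field_simp
    have e2 : (p / r - 1) ^ 2 = (p - r) ^ 2 / r ^ 2 := by
      field_simp
      try ring
    have e3 : p / r + 2 = (p + 2 * r) / r := by field_simp
    rw [e1, e2, e3] at key
    have hr2 : (0:ℝ) < r ^ 2 := by positivity
    have key2 : 3 * (p - r) ^ 2 ≤ 2 * (p + 2 * r) * (p * Real.log (p / r) - p + r) := by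
      have hm := mul_le_mul_of_nonneg_right key hr2.le
      calc 3 * (p - r) ^ 2 = 3 * ((p - r) ^ 2 / r ^ 2) * r ^ 2 := by field_simp
        _ ≤ 2 * ((p + 2 * r) / r) * ((p * Real.log (p / r) - p + r) / r) * r ^ 2 := hm
        _ = 2 * (p + 2 * r) * (p * Real.log (p / r) - p + r) := by
            field_simp
            try tauto
    rw [div_le_iff₀ (by positivity)]
    linarith

/-- **Pinsker's inequality** for finitely supported distributions. -/
lemma finset_pinsker {𝒴 : Type*} [Fintype 𝒴] (p r : 𝒴 → ℝ)
    (hp0 : ∀ y, 0 ≤ p y) (hr0 : ∀ y, 0 ≤ r y)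
    (hp1 : ∑ y, p y = 1) (hr1 : ∑ y, r y = 1)
    (hac : ∀ y, r y = 0 → p y = 0) :
    2 * ((1 / 2) * ∑ y, |p y - r y|) ^ 2 ≤ ∑ y, p y * Real.log (p y / r y) := by
  set S := ∑ y, (p y - r y) ^ 2 / (p y + 2 * r y) with hS
  have step1 : ∑ y, p y * Real.log (p y / r y)
      = ∑ y, (p y * Real.log (p y / r y) - p y + r y) := by
    rw [Finset.sum_add_distrib, Finset.sum_sub_distrib, hp1, hr1]
    ring
  have step2 : (3 / 2) * S ≤ ∑ y, p y * Real.log (p y / r y) := by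
    rw [step1, hS, Finset.mul_sum]
    apply Finset.sum_le_sum
    intro y _
    have := pointwise_pinsker (hp0 y) (hr0 y) (hac y)
    calc 3 / 2 * ((p y - r y) ^ 2 / (p y + 2 * r y))
        = 3 * (p y - r y) ^ 2 / (2 * (p y + 2 * r y)) := by
          rw [div_mul_div_comm]
      _ ≤ _ := this
  have step3 : (∑ y, |p y - r y|) ^ 2 ≤ S * 3 := by
    have cs := Finset.sum_mul_sq_le_sq_mul_sq Finset.univ
      (fun y => |p y - r y| / Real.sqrt (p y + 2 * r y))
      (fun y => Real.sqrt (p y + 2 * r y))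
    have hfg : ∀ y : 𝒴, |p y - r y| / Real.sqrt (p y + 2 * r y) * Real.sqrt (p y + 2 * r y)
        = |p y - r y| := by
      intro y
      have hyy : (0:ℝ) ≤ p y + 2 * r y := by have := hp0 y; have := hr0 y; linarith
      rcases eq_or_lt_of_le hyy with h0 | h0
      · have hp' : p y = 0 := by nlinarith [hp0 y, hr0 y]
        have hr' : r y = 0 := by nlinarith [hp0 y, hr0 y]
        simp [hp', hr']
      · exact div_mul_cancel₀ _ (Real.sqrt_ne_zero'.2 h0)
    have hf2 : ∀ y : 𝒴, (|p y - r y| / Real.sqrt (p y + 2 * r y)) ^ 2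
        = (p y - r y) ^ 2 / (p y + 2 * r y) := by
      intro y
      have hyy : (0:ℝ) ≤ p y + 2 * r y := by have := hp0 y; have := hr0 y; linarith
      rw [div_pow, sq_abs, Real.sq_sqrt hyy]
    have hg2 : ∀ y : 𝒴, (Real.sqrt (p y + 2 * r y)) ^ 2 = p y + 2 * r y := by
      intro y
      exact Real.sq_sqrt (by have := hp0 y; have := hr0 y; linarith)
    simp only [hfg, hf2, hg2] at cs
    have hsum3 : ∑ y, (p y + 2 * r y) = 3 := by
      rw [Finset.sum_add_distrib, hp1, ← Finset.mul_sum, hr1]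
      norm_num
    rw [hsum3] at cs
    exact cs
  have hTV : 2 * ((1 / 2) * ∑ y, |p y - r y|) ^ 2 = (1 / 2) * (∑ y, |p y - r y|) ^ 2 := by
    ring
  rw [hTV]
  calc (1 / 2) * (∑ y, |p y - r y|) ^ 2 ≤ (1 / 2) * (S * 3) := by linarith
    _ = (3 / 2) * S := by ring
    _ ≤ _ := step2

lemma TV_nonneg (p q : 𝒴 → ℝ) : 0 ≤ TV p q := by
  unfold TV; positivity

lemma TV_triangle (p q r : 𝒴 → ℝ) : TV p r ≤ TV p q + TV q r := by
  unfold TV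
  rw [← mul_add, ← Finset.sum_add_distrib]
  gcongr with y _
  exact abs_sub_le (p y) (q y) (r y)

lemma TV_symm (p q : 𝒴 → ℝ) : TV p q = TV q p := by
  unfold TV
  congr 1
  exact Finset.sum_congr rfl fun y _ => abs_sub_comm _ _

lemma TV_eq_one_sub_sum_min (p q : 𝒴 → ℝ) (hp : ∑ y, p y = 1) (hq : ∑ y, q y = 1) :
    TV p q = 1 - ∑ y, min (p y) (q y) := by
  unfold TV
  have key : ∀ y, |p y - q y| = p y + q y - 2 * min (p y) (q y) := by
    intro y
    rcases le_total (p y) (q y) with hle | hle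
    · rw [abs_of_nonpos (by linarith), min_eq_left hle]; ring
    · rw [abs_of_nonneg (by linarith), min_eq_right hle]; ring
  simp_rw [key]
  rw [Finset.sum_sub_distrib, Finset.sum_add_distrib, hp, hq, ← Finset.mul_sum]
  ring

section Struct

variable (P : 𝒳 → 𝒴 → 𝒮 → ℝ) (Q : 𝒳 → 𝒮 → 𝒴 → ℝ)

lemma margS_total (hP1 : ∑ x, ∑ y, ∑ s, P x y s = 1) : ∑ s, margS P s = 1 := by
  unfold margS
  rw [← hP1]
  rw [Finset.sum_comm]
  exact Finset.sum_congr rfl fun x _ => Finset.sum_comm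

lemma margS_eq_sum_y (s : 𝒮) : margS P s = ∑ y, ∑ x, P x y s := by
  unfold margS; exact Finset.sum_comm

lemma condYS_nonneg (hP0 : ∀ x y s, 0 ≤ P x y s) (hS : ∀ s, 0 < margS P s) (s : 𝒮) (y : 𝒴) :
    0 ≤ condYS P s y := by
  unfold condYS
  exact div_nonneg (Finset.sum_nonneg fun x _ => hP0 x y s) (hS s).le

lemma condYS_sum (hS : ∀ s, 0 < margS P s) (s : 𝒮) : ∑ y, condYS P s y = 1 := by
  unfold condYS
  rw [← Finset.sum_div, ← margS_eq_sum_y, div_self (hS s).ne']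

lemma sum_U_eq (s : 𝒮) (y : 𝒴) (hS : ∀ s, 0 < margS P s) :
    ∑ x, P x y s = margS P s * condYS P s y := by
  unfold condYS
  rw [mul_div_cancel₀]
  exact (hS s).ne'

lemma joint_nonneg (hP0 : ∀ x y s, 0 ≤ P x y s) (hQ0 : ∀ x s y, 0 ≤ Q x s y) (yh : 𝒴) (s : 𝒮) :
    0 ≤ jointYhatS P Q yh s :=
  Finset.sum_nonneg fun x _ => Finset.sum_nonneg fun y _ => mul_nonneg (hP0 x y s) (hQ0 x s yh)

lemma joint_sum (hQ1 : ∀ x s, ∑ y, Q x s y = 1) (s : 𝒮) :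
    ∑ yh, jointYhatS P Q yh s = margS P s := by
  unfold jointYhatS margS
  rw [Finset.sum_comm]
  refine Finset.sum_congr rfl fun x _ => ?_
  rw [Finset.sum_comm]
  refine Finset.sum_congr rfl fun y _ => ?_
  rw [← Finset.mul_sum, hQ1 x s, mul_one]

lemma joint_eq (hS : ∀ s, 0 < margS P s) (yh : 𝒴) (s : 𝒮) :
    jointYhatS P Q yh s = margS P s * condYhatS P Q s yh := by
  unfold condYhatS
  rw [mul_div_cancel₀]
  exact (hS s).ne'

lemma condYhatS_nonneg (hP0 : ∀ x y s, 0 ≤ P x y s) (hQ0 : ∀ x s y, 0 ≤ Q x s y)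
    (hS : ∀ s, 0 < margS P s) (s : 𝒮) (yh : 𝒴) : 0 ≤ condYhatS P Q s yh :=
  div_nonneg (joint_nonneg P Q hP0 hQ0 yh s) (hS s).le

lemma condYhatS_sum (hQ1 : ∀ x s, ∑ y, Q x s y = 1) (hS : ∀ s, 0 < margS P s) (s : 𝒮) :
    ∑ yh, condYhatS P Q s yh = 1 := by
  unfold condYhatS
  rw [← Finset.sum_div, joint_sum P Q hQ1, div_self (hS s).ne']

lemma margYhat_eq (hS : ∀ s, 0 < margS P s) (yh : 𝒴) :
    margYhat P Q yh = ∑ s, margS P s * condYhatS P Q s yh := by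
  unfold margYhat
  exact Finset.sum_congr rfl fun s _ => joint_eq P Q hS yh s

lemma margYhat_nonneg (hP0 : ∀ x y s, 0 ≤ P x y s) (hQ0 : ∀ x s y, 0 ≤ Q x s y) (yh : 𝒴) :
    0 ≤ margYhat P Q yh :=
  Finset.sum_nonneg fun s _ => joint_nonneg P Q hP0 hQ0 yh s

lemma margYhat_sum (hP1 : ∑ x, ∑ y, ∑ s, P x y s = 1) (hQ1 : ∀ x s, ∑ y, Q x s y = 1) :
    ∑ yh, margYhat P Q yh = 1 := by
  unfold margYhat
  rw [Finset.sum_comm]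
  rw [← margS_total P hP1]
  exact Finset.sum_congr rfl fun s _ => joint_sum P Q hQ1 s

lemma margYhat_zero (hP0 : ∀ x y s, 0 ≤ P x y s) (hQ0 : ∀ x s y, 0 ≤ Q x s y)
    (hS : ∀ s, 0 < margS P s) (yh : 𝒴) (hm : margYhat P Q yh = 0) (s : 𝒮) :
    condYhatS P Q s yh = 0 := by
  have hj : jointYhatS P Q yh s = 0 := by
    have := (Finset.sum_eq_zero_iff_of_nonneg
      (fun s _ => joint_nonneg P Q hP0 hQ0 yh s)).1 hm
    exact this s (Finset.mem_univ s)
  unfold condYhatS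
  rw [hj, zero_div]

lemma MI_eq (hS : ∀ s, 0 < margS P s) :
    MI P Q = ∑ s, margS P s * ∑ yh, condYhatS P Q s yh *
      Real.log (condYhatS P Q s yh / margYhat P Q yh) := by
  unfold MI
  rw [Finset.sum_comm]
  refine Finset.sum_congr rfl fun s _ => ?_
  rw [Finset.mul_sum]
  refine Finset.sum_congr rfl fun yh _ => ?_
  rw [joint_eq P Q hS yh s]
  have harg : margS P s * condYhatS P Q s yh / (margYhat P Q yh * margS P s)
      = condYhatS P Q s yh / margYhat P Q yh := by
    rw [mul_comm (margS P s) (condYhatS P Q s yh)]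
    exact mul_div_mul_right _ _ (hS s).ne'
  rw [harg]
  ring

lemma risk_eq (hQ1 : ∀ x s, ∑ y, Q x s y = 1) :
    risk P Q = ∑ s, ∑ x, ∑ y, P x y s * (1 - Q x s y) := by
  have inner : ∀ x y s, (∑ yh, P x y s * Q x s yh * (if yh = y then (0:ℝ) else 1))
      = P x y s * (1 - Q x s y) := by
    intro x y s
    have e : ∀ yh, P x y s * Q x s yh * (if yh = y then (0:ℝ) else 1)
        = P x y s * Q x s yh - (if yh = y then P x y s * Q x s yh else 0) := by
      intro yh; by_cases hy : yh = y <;> simp [hy]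
    simp_rw [e]
    rw [Finset.sum_sub_distrib, ← Finset.mul_sum, hQ1 x s,
      Finset.sum_ite_eq' Finset.univ y (fun yh => P x y s * Q x s yh)]
    simp [mul_sub]
  unfold risk
  simp_rw [inner]
  calc ∑ x, ∑ y, ∑ s, P x y s * (1 - Q x s y)
      = ∑ x, ∑ s, ∑ y, P x y s * (1 - Q x s y) :=
        Finset.sum_congr rfl fun x _ => Finset.sum_comm
    _ = ∑ s, ∑ x, ∑ y, P x y s * (1 - Q x s y) := Finset.sum_comm


lemma Qle1 (hQ0 : ∀ x s y, 0 ≤ Q x s y) (hQ1 : ∀ x s, ∑ y, Q x s y = 1)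
    (x : 𝒳) (s : 𝒮) (y : 𝒴) : Q x s y ≤ 1 := by
  rw [← hQ1 x s]
  exact Finset.single_le_sum (fun y' _ => hQ0 x s y') (Finset.mem_univ y)

lemma sum_P_y (h : 𝒳 → 𝒮 → 𝒴) (hdet : ∀ x y s, y ≠ h x s → P x y s = 0) (x : 𝒳) (s : 𝒮) :
    ∑ y, P x y s = P x (h x s) s :=
  Finset.sum_eq_single (h x s) (fun y' _ hy' => hdet x y' s hy')
    (fun hx => absurd (Finset.mem_univ _) hx)

lemma risk_lb (hP0 : ∀ x y s, 0 ≤ P x y s) (hQ0 : ∀ x s y, 0 ≤ Q x s y)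
    (hQ1 : ∀ x s, ∑ y, Q x s y = 1) (hS : ∀ s, 0 < margS P s)
    (h : 𝒳 → 𝒮 → 𝒴) (hdet : ∀ x y s, y ≠ h x s → P x y s = 0) (s : 𝒮) :
    margS P s * TV (condYhatS P Q s) (condYS P s) ≤ ∑ x, ∑ y, P x y s * (1 - Q x s y) := by
  have hw := hS s
  have e1 : margS P s * TV (condYhatS P Q s) (condYS P s)
      = (1 / 2) * ∑ y, |jointYhatS P Q y s - ∑ x, P x y s| := by
    unfold TV
    rw [← mul_assoc, mul_comm (margS P s) (1/2 : ℝ), mul_assoc, Finset.mul_sum]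
    congr 1
    refine Finset.sum_congr rfl fun y _ => ?_
    rw [joint_eq P Q hS y s, sum_U_eq P s y hS, ← mul_sub, abs_mul, abs_of_nonneg hw.le]
  have e2 : ∀ y, jointYhatS P Q y s - ∑ x, P x y s
      = ∑ x, ((∑ y', P x y' s) * Q x s y - P x y s) := by
    intro y
    unfold jointYhatS
    rw [Finset.sum_sub_distrib]
    congr 1
    exact Finset.sum_congr rfl fun x _ => (Finset.sum_mul _ _ _).symm
  have e4 : ∀ x, ∑ y, |(∑ y', P x y' s) * Q x s y - P x y s|
      = 2 * (P x (h x s) s * (1 - Q x s (h x s))) := by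
    intro x
    rw [← Finset.add_sum_erase Finset.univ _ (Finset.mem_univ (h x s))]
    have hA : ∑ y', P x y' s = P x (h x s) s := sum_P_y P h hdet x s
    have hterm : |(∑ y', P x y' s) * Q x s (h x s) - P x (h x s) s|
        = P x (h x s) s * (1 - Q x s (h x s)) := by
      rw [hA, ← abs_neg]
      rw [show -(P x (h x s) s * Q x s (h x s) - P x (h x s) s)
          = P x (h x s) s * (1 - Q x s (h x s)) by ring]
      exact abs_of_nonneg (mul_nonneg (hP0 _ _ _)
        (by linarith [Qle1 Q hQ0 hQ1 x s (h x s)]))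
    have hrest : ∑ y ∈ Finset.univ.erase (h x s), |(∑ y', P x y' s) * Q x s y - P x y s|
        = P x (h x s) s * (1 - Q x s (h x s)) := by
      have : ∀ y ∈ Finset.univ.erase (h x s), |(∑ y', P x y' s) * Q x s y - P x y s|
          = P x (h x s) s * Q x s y := by
        intro y hy
        rw [hdet x y s (Finset.ne_of_mem_erase hy), hA, sub_zero]
        exact abs_of_nonneg (mul_nonneg (hP0 _ _ _) (hQ0 _ _ _))
      rw [Finset.sum_congr rfl this, ← Finset.mul_sum,
        Finset.sum_erase_eq_sub (Finset.mem_univ (h x s)), hQ1 x s]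
      try ring
    rw [hterm, hrest]
    ring
  have e5 : ∀ x, ∑ y, P x y s * (1 - Q x s y) = P x (h x s) s * (1 - Q x s (h x s)) := by
    intro x
    exact Finset.sum_eq_single (h x s) (fun y _ hy => by rw [hdet x y s hy, zero_mul])
      (fun hx => absurd (Finset.mem_univ _) hx)
  rw [e1]
  calc (1 / 2) * ∑ y, |jointYhatS P Q y s - ∑ x, P x y s|
      ≤ (1 / 2) * ∑ y, ∑ x, |(∑ y', P x y' s) * Q x s y - P x y s| := by
        gcongr with y _
        rw [e2 y]
        exact Finset.abs_sum_le_sum_abs _ _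
    _ = (1 / 2) * ∑ x, ∑ y, |(∑ y', P x y' s) * Q x s y - P x y s| := by
        rw [Finset.sum_comm]
    _ = ∑ x, P x (h x s) s * (1 - Q x s (h x s)) := by
        rw [Finset.mul_sum]
        refine Finset.sum_congr rfl fun x _ => ?_
        rw [e4 x]
        ring
    _ = ∑ x, ∑ y, P x y s * (1 - Q x s y) := by
        exact Finset.sum_congr rfl fun x _ => (e5 x).symm

end Struct

section Star

variable (P : 𝒳 → 𝒴 → 𝒮 → ℝ)

/-- pointwise min of the two conditional label distributions -/
def mmin (smax s : 𝒮) (y : 𝒴) : ℝ := min (condYS P s y) (condYS P smax y)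

def Tgap (smax s : 𝒮) : ℝ := ∑ y, (condYS P smax y - mmin P smax s y)

open Classical in
def rstar (smax s : 𝒮) (y : 𝒴) : ℝ :=
  if Tgap P smax s = 0 then 0 else (condYS P smax y - mmin P smax s y) / Tgap P smax s

open Classical in
def Kstar (smax s : 𝒮) (y y' : 𝒴) : ℝ :=
  if condYS P s y = 0 then condYS P smax y'
  else mmin P smax s y / condYS P s y * (if y' = y then 1 else 0)
    + (1 - mmin P smax s y / condYS P s y) * rstar P smax s y'

def ruleStar (h : 𝒳 → 𝒮 → 𝒴) (smax : 𝒮) (x : 𝒳) (s : 𝒮) (y' : 𝒴) : ℝ :=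
  Kstar P smax s (h x s) y'

variable (hP0 : ∀ x y s, 0 ≤ P x y s) (hS : ∀ s, 0 < margS P s)

include hP0 hS

lemma mmin_nonneg (smax s : 𝒮) (y : 𝒴) : 0 ≤ mmin P smax s y :=
  le_min (condYS_nonneg P hP0 hS s y) (condYS_nonneg P hP0 hS smax y)

omit hP0 hS in
lemma mmin_le_u (smax s : 𝒮) (y : 𝒴) : mmin P smax s y ≤ condYS P s y := min_le_left _ _

omit hP0 hS in
lemma mmin_le_q (smax s : 𝒮) (y : 𝒴) : mmin P smax s y ≤ condYS P smax y := min_le_right _ _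

omit hP0 hS in
lemma Tgap_nonneg (smax s : 𝒮) : 0 ≤ Tgap P smax s :=
  Finset.sum_nonneg fun y _ => sub_nonneg.2 (mmin_le_q P smax s y)

omit hP0 in
lemma Tgap_sum (smax s : 𝒮) : Tgap P smax s = 1 - ∑ y, mmin P smax s y := by
  unfold Tgap
  rw [Finset.sum_sub_distrib, condYS_sum P hS smax]

omit hP0 in
lemma Tgap_eq (smax s : 𝒮) : Tgap P smax s = TV (condYS P s) (condYS P smax) := by
  rw [Tgap_sum P hS smax s,
    TV_eq_one_sub_sum_min _ _ (condYS_sum P hS s) (condYS_sum P hS smax)]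
  rfl

omit hP0 hS in
lemma Tgap_zero_q (smax s : 𝒮) (hT : Tgap P smax s = 0) (y : 𝒴) :
    mmin P smax s y = condYS P smax y := by
  have := (Finset.sum_eq_zero_iff_of_nonneg
    (fun y _ => sub_nonneg.2 (mmin_le_q P smax s y))).1 hT y (Finset.mem_univ y)
  linarith

omit hP0 in
lemma Tgap_zero_u (smax s : 𝒮) (hT : Tgap P smax s = 0) (y : 𝒴) :
    mmin P smax s y = condYS P s y := by
  have hsum : ∑ y, (condYS P s y - mmin P smax s y) = 0 := by
    rw [Finset.sum_sub_distrib, condYS_sum P hS s]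
    have h1 := Tgap_sum P hS smax s
    rw [hT] at h1
    linarith
  have := (Finset.sum_eq_zero_iff_of_nonneg
    (fun y _ => sub_nonneg.2 (mmin_le_u P smax s y))).1 hsum y (Finset.mem_univ y)
  linarith

omit hP0 hS in
lemma rstar_nonneg (smax s : 𝒮) (y : 𝒴) : 0 ≤ rstar P smax s y := by
  unfold rstar
  split
  · exact le_refl 0
  · exact div_nonneg (sub_nonneg.2 (mmin_le_q P smax s y)) (Tgap_nonneg P smax s)

omit hP0 in
lemma rstar_sum (smax s : 𝒮) :
    ∑ y, rstar P smax s y = if Tgap P smax s = 0 then 0 else 1 := by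
  unfold rstar
  split
  · simp
  · rw [← Finset.sum_div]
    rw [show (∑ y, (condYS P smax y - mmin P smax s y)) = Tgap P smax s from rfl]
    rw [div_self]
    assumption

lemma Kstar_nonneg (smax s : 𝒮) (y y' : 𝒴) : 0 ≤ Kstar P smax s y y' := by
  unfold Kstar
  by_cases hu : condYS P s y = 0
  · rw [if_pos hu]
    exact condYS_nonneg P hP0 hS smax y'
  · rw [if_neg hu]
    have hu' : 0 < condYS P s y := lt_of_le_of_ne (condYS_nonneg P hP0 hS s y) (Ne.symm hu)
    have h1 : 0 ≤ mmin P smax s y / condYS P s y :=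
      div_nonneg (mmin_nonneg P hP0 hS smax s y) hu'.le
    have h2 : mmin P smax s y / condYS P s y ≤ 1 :=
      (div_le_one hu').2 (mmin_le_u P smax s y)
    have h3 := rstar_nonneg P smax s y'
    have h4 : (0:ℝ) ≤ (if y' = y then (1:ℝ) else 0) := by split <;> norm_num
    nlinarith

lemma Kstar_sum (smax s : 𝒮) (y : 𝒴) : ∑ y', Kstar P smax s y y' = 1 := by
  unfold Kstar
  by_cases hu : condYS P s y = 0
  · simp only [if_pos hu]
    exact condYS_sum P hS smax
  · simp only [if_neg hu]
    have hu' : 0 < condYS P s y := lt_of_le_of_ne (condYS_nonneg P hP0 hS s y) (Ne.symm hu)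
    rw [Finset.sum_add_distrib, ← Finset.mul_sum, ← Finset.mul_sum]
    rw [rstar_sum P hS smax s]
    have hite : ∑ y' : 𝒴, (if y' = y then (1:ℝ) else 0) = 1 := by simp
    rw [hite, mul_one]
    by_cases hT : Tgap P smax s = 0
    · rw [if_pos hT]
      have := Tgap_zero_u P hS smax s hT y
      rw [this, div_self hu'.ne']
      ring
    · rw [if_neg hT]
      ring

lemma Kstar_mul (smax s : 𝒮) (y y' : 𝒴) :
    condYS P s y * Kstar P smax s y y'
      = mmin P smax s y * (if y' = y then 1 else 0)
        + (condYS P s y - mmin P smax s y) * rstar P smax s y' := by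
  unfold Kstar
  by_cases hu : condYS P s y = 0
  case pos =>
    rw [if_pos hu]
    have hm : mmin P smax s y = 0 := by
      have := mmin_le_u P smax s y
      have := mmin_nonneg P hP0 hS smax s y
      rw [hu] at *
      linarith
    rw [hu, hm]
    ring
  case neg =>
    rw [if_neg hu]
    by_cases hy : y' = y
    · simp only [if_pos hy, mul_one]
      field_simp
      try ring
    · simp only [if_neg hy, mul_zero]
      field_simp
      try ring

lemma Kstar_marg (smax s : 𝒮) (hP1 : ∑ x, ∑ y, ∑ s, P x y s = 1) (y' : 𝒴) :
    ∑ y, condYS P s y * Kstar P smax s y y' = condYS P smax y' := by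
  have e : ∀ y, condYS P s y * Kstar P smax s y y'
      = (if y' = y then mmin P smax s y else 0)
        + (condYS P s y - mmin P smax s y) * rstar P smax s y' := by
    intro y
    rw [Kstar_mul P hP0 hS smax s y y']
    congr 1
    split <;> ring
  simp_rw [e]
  rw [Finset.sum_add_distrib, Finset.sum_ite_eq Finset.univ y' (fun y => mmin P smax s y)]
  rw [if_pos (Finset.mem_univ y'), ← Finset.sum_mul, Finset.sum_sub_distrib,
    condYS_sum P hS s]
  have hsub : 1 - ∑ y, mmin P smax s y = Tgap P smax s := (Tgap_sum P hS smax s).symm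
  rw [hsub]
  unfold rstar
  by_cases hT : Tgap P smax s = 0
  · rw [if_pos hT, Tgap_zero_q P smax s hT y']
    ring
  · rw [if_neg hT, mul_comm, div_mul_cancel₀ _ hT]
    ring

lemma Kstar_diag (smax s : 𝒮) (y : 𝒴) :
    condYS P s y * (1 - Kstar P smax s y y)
      ≤ condYS P s y - mmin P smax s y := by
  have := Kstar_mul P hP0 hS smax s y y
  rw [if_pos rfl, mul_one] at this
  have hr := rstar_nonneg P smax s y
  have hum : 0 ≤ condYS P s y - mmin P smax s y := sub_nonneg.2 (mmin_le_u P smax s y)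
  have h5 : 0 ≤ (condYS P s y - mmin P smax s y) * rstar P smax s y := mul_nonneg hum hr
  have hexp : condYS P s y * (1 - Kstar P smax s y y)
      = condYS P s y - condYS P s y * Kstar P smax s y y := by ring
  linarith [this, h5, hexp]


section Rule

variable (h : 𝒳 → 𝒮 → 𝒴) (smax : 𝒮)

omit hP0 hS in
lemma ruleStar_isRule (hP0 : ∀ x y s, 0 ≤ P x y s) (hS : ∀ s, 0 < margS P s) :
    IsRule (ruleStar P h smax) := by
  constructor
  · intro x s y
    exact Kstar_nonneg P hP0 hS smax s (h x s) y
  · intro x s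
    exact Kstar_sum P hP0 hS smax s (h x s)

omit hP0 hS in
lemma ruleStar_joint (hP0 : ∀ x y s, 0 ≤ P x y s) (hS : ∀ s, 0 < margS P s)
    (hP1 : ∑ x, ∑ y, ∑ s, P x y s = 1)
    (hdet : ∀ x y s, y ≠ h x s → P x y s = 0) (y' : 𝒴) (s : 𝒮) :
    jointYhatS P (ruleStar P h smax) y' s = margS P s * condYS P smax y' := by
  unfold jointYhatS ruleStar
  have e : ∀ x y, P x y s * Kstar P smax s (h x s) y' = P x y s * Kstar P smax s y y' := by
    intro x y
    by_cases hy : y = h x s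
    · rw [hy]
    · rw [hdet x y s hy, zero_mul, zero_mul]
  simp_rw [e]
  rw [Finset.sum_comm]
  have e2 : ∀ y, ∑ x, P x y s * Kstar P smax s y y'
      = (margS P s * condYS P s y) * Kstar P smax s y y' := by
    intro y
    rw [← Finset.sum_mul, sum_U_eq P s y hS]
  simp_rw [e2]
  have e3 : ∀ y, margS P s * condYS P s y * Kstar P smax s y y'
      = margS P s * (condYS P s y * Kstar P smax s y y') := fun y => by ring
  simp_rw [e3]
  rw [← Finset.mul_sum, Kstar_marg P hP0 hS smax s hP1 y']

omit hP0 hS in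
lemma ruleStar_margYhat (hP0 : ∀ x y s, 0 ≤ P x y s) (hS : ∀ s, 0 < margS P s)
    (hP1 : ∑ x, ∑ y, ∑ s, P x y s = 1)
    (hdet : ∀ x y s, y ≠ h x s → P x y s = 0) (y' : 𝒴) :
    margYhat P (ruleStar P h smax) y' = condYS P smax y' := by
  unfold margYhat
  have e : ∀ s, jointYhatS P (ruleStar P h smax) y' s = margS P s * condYS P smax y' :=
    fun s => ruleStar_joint P h smax hP0 hS hP1 hdet y' s
  simp_rw [e]
  rw [← Finset.sum_mul, margS_total P hP1, one_mul]

omit hP0 hS in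
lemma ruleStar_MI (hP0 : ∀ x y s, 0 ≤ P x y s) (hS : ∀ s, 0 < margS P s)
    (hP1 : ∑ x, ∑ y, ∑ s, P x y s = 1)
    (hdet : ∀ x y s, y ≠ h x s → P x y s = 0) :
    MI P (ruleStar P h smax) = 0 := by
  unfold MI
  apply Finset.sum_eq_zero
  intro y' _
  apply Finset.sum_eq_zero
  intro s _
  rw [ruleStar_joint P h smax hP0 hS hP1 hdet y' s,
    ruleStar_margYhat P h smax hP0 hS hP1 hdet y']
  by_cases hq : condYS P smax y' = 0
  · rw [hq]
    ring
  · have harg : margS P s * condYS P smax y' / (condYS P smax y' * margS P s) = 1 := by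
      rw [mul_comm (margS P s) (condYS P smax y')]
      exact div_self (mul_ne_zero hq (hS s).ne')
    rw [harg, Real.log_one, mul_zero]

omit hP0 hS in
lemma ruleStar_risk (hP0 : ∀ x y s, 0 ≤ P x y s) (hS : ∀ s, 0 < margS P s)
    (hdet : ∀ x y s, y ≠ h x s → P x y s = 0) :
    risk P (ruleStar P h smax)
      ≤ ∑ s, margS P s * TV (condYS P s) (condYS P smax) := by
  rw [risk_eq P (ruleStar P h smax) (fun x s => Kstar_sum P hP0 hS smax s (h x s))]
  apply Finset.sum_le_sum
  intro s _
  have e : ∀ x y, P x y s * (1 - ruleStar P h smax x s y)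
      = P x y s * (1 - Kstar P smax s y y) := by
    intro x y
    by_cases hy : y = h x s
    · rw [hy]; rfl
    · rw [hdet x y s hy, zero_mul, zero_mul]
  simp_rw [e]
  rw [Finset.sum_comm]
  have e2 : ∀ y, ∑ x, P x y s * (1 - Kstar P smax s y y)
      = margS P s * (condYS P s y * (1 - Kstar P smax s y y)) := by
    intro y
    rw [← Finset.sum_mul, sum_U_eq P s y hS]
    ring
  simp_rw [e2]
  rw [← Finset.mul_sum, ← Tgap_eq P hS smax s]
  have hle : ∑ y, condYS P s y * (1 - Kstar P smax s y y) ≤ Tgap P smax s := by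
    have : ∀ y, condYS P s y * (1 - Kstar P smax s y y)
        ≤ condYS P s y - mmin P smax s y := fun y => Kstar_diag P hP0 hS smax s y
    calc ∑ y, condYS P s y * (1 - Kstar P smax s y y)
        ≤ ∑ y, (condYS P s y - mmin P smax s y) := Finset.sum_le_sum fun y _ => this y
      _ = 1 - ∑ y, mmin P smax s y := by
          rw [Finset.sum_sub_distrib, condYS_sum P hS s]
      _ = Tgap P smax s := (Tgap_sum P hS smax s).symm
  exact mul_le_mul_of_nonneg_left hle (hS s).le

end Rule

end Star

lemma TV_self (p : 𝒴 → ℝ) : TV p p = 0 := by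
  unfold TV
  simp

section Avg

variable (P : 𝒳 → 𝒴 → 𝒮 → ℝ) (Q : 𝒳 → 𝒮 → 𝒴 → ℝ)

lemma avgTV_le (hP0 : ∀ x y s, 0 ≤ P x y s) (hP1 : ∑ x, ∑ y, ∑ s, P x y s = 1)
    (hS : ∀ s, 0 < margS P s) (hQ0 : ∀ x s y, 0 ≤ Q x s y)
    (hQ1 : ∀ x s, ∑ y, Q x s y = 1) :
    2 * (∑ s, margS P s * TV (condYhatS P Q s) (margYhat P Q)) ^ 2 ≤ MI P Q := by
  have pin : ∀ s, 2 * TV (condYhatS P Q s) (margYhat P Q) ^ 2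
      ≤ ∑ yh, condYhatS P Q s yh * Real.log (condYhatS P Q s yh / margYhat P Q yh) := by
    intro s
    have := finset_pinsker (condYhatS P Q s) (margYhat P Q)
      (fun y => condYhatS_nonneg P Q hP0 hQ0 hS s y)
      (fun y => margYhat_nonneg P Q hP0 hQ0 y)
      (condYhatS_sum P Q hQ1 hS s) (margYhat_sum P Q hP1 hQ1)
      (fun y hy => margYhat_zero P Q hP0 hQ0 hS y hy s)
    exact this
  have cs : (∑ s, margS P s * TV (condYhatS P Q s) (margYhat P Q)) ^ 2
      ≤ ∑ s, margS P s * TV (condYhatS P Q s) (margYhat P Q) ^ 2 := by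
    have := Finset.sum_mul_sq_le_sq_mul_sq Finset.univ
      (fun s => Real.sqrt (margS P s))
      (fun s => Real.sqrt (margS P s) * TV (condYhatS P Q s) (margYhat P Q))
    have e1 : ∀ s : 𝒮, Real.sqrt (margS P s)
        * (Real.sqrt (margS P s) * TV (condYhatS P Q s) (margYhat P Q))
        = margS P s * TV (condYhatS P Q s) (margYhat P Q) := by
      intro s
      rw [← mul_assoc, Real.mul_self_sqrt (hS s).le]
    have e2 : ∀ s : 𝒮, Real.sqrt (margS P s) ^ 2 = margS P s :=
      fun s => Real.sq_sqrt (hS s).le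
    have e3 : ∀ s : 𝒮, (Real.sqrt (margS P s) * TV (condYhatS P Q s) (margYhat P Q)) ^ 2
        = margS P s * TV (condYhatS P Q s) (margYhat P Q) ^ 2 := by
      intro s
      rw [mul_pow, e2 s]
    simp only [e1, e2, e3] at this
    rw [margS_total P hP1, one_mul] at this
    exact this
  rw [MI_eq P Q hS]
  calc 2 * (∑ s, margS P s * TV (condYhatS P Q s) (margYhat P Q)) ^ 2
      ≤ 2 * ∑ s, margS P s * TV (condYhatS P Q s) (margYhat P Q) ^ 2 := by linarith
    _ = ∑ s, margS P s * (2 * TV (condYhatS P Q s) (margYhat P Q) ^ 2) := by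
        rw [Finset.mul_sum]
        exact Finset.sum_congr rfl fun s _ => by ring
    _ ≤ ∑ s, margS P s * ∑ yh, condYhatS P Q s yh
          * Real.log (condYhatS P Q s yh / margYhat P Q yh) :=
        Finset.sum_le_sum fun s _ => mul_le_mul_of_nonneg_left (pin s) (hS s).le

end Avg

/-- **Theorem 2 (mutual information case).** If `Y = h(X, S)` is deterministic,
`P_S(s_max) = 1/2 + δ` with `δ > 0`, and `Q` is an optimal randomized prediction rule among
those with `I(Ŷ; S) ≤ ε`, then
`E_{s∼P_S}[TV(P_{Ŷ|S=s}, P_{Y|S=s_max})] ≤ (1/2 + 1/(4δ)) √(2ε)`. -/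
theorem mi_fair_optimal_inductive_bias
    (P : 𝒳 → 𝒴 → 𝒮 → ℝ)
    (hP0 : ∀ x y s, 0 ≤ P x y s)
    (hP1 : ∑ x, ∑ y, ∑ s, P x y s = 1)
    (hS : ∀ s, 0 < margS P s)
    (h : 𝒳 → 𝒮 → 𝒴) (hdet : ∀ x y s, y ≠ h x s → P x y s = 0)
    (smax : 𝒮) (δ : ℝ) (hδ : 0 < δ) (hsmax : margS P smax = 1 / 2 + δ)
    (ε : ℝ)
    (Q : 𝒳 → 𝒮 → 𝒴 → ℝ) (hQ : IsRule Q)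
    (hfair : MI P Q ≤ ε)
    (hopt : ∀ Q' : 𝒳 → 𝒮 → 𝒴 → ℝ, IsRule Q' → MI P Q' ≤ ε → risk P Q ≤ risk P Q') :
    ∑ s, margS P s * TV (condYhatS P Q s) (condYS P smax)
      ≤ (1 / 2 + 1 / (4 * δ)) * Real.sqrt (2 * ε) := by
  classical
  obtain ⟨hQ0, hQ1⟩ := hQ
  set A := ∑ s, margS P s * TV (condYhatS P Q s) (margYhat P Q) with hA_def
  set t := TV (margYhat P Q) (condYS P smax) with ht_def
  -- Step 1: A ≤ √(ε/2), ε ≥ 0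
  have hA2 : 2 * A ^ 2 ≤ ε := le_trans (avgTV_le P Q hP0 hP1 hS hQ0 hQ1) hfair
  have hAnn : 0 ≤ A :=
    Finset.sum_nonneg fun s _ => mul_nonneg (hS s).le (TV_nonneg _ _)
  have hεnn : 0 ≤ ε := le_trans (by positivity) hA2
  have hA : A ≤ Real.sqrt (ε / 2) := by
    have h1 : A ^ 2 ≤ ε / 2 := by linarith
    calc A = Real.sqrt (A ^ 2) := (Real.sqrt_sq hAnn).symm
      _ ≤ Real.sqrt (ε / 2) := Real.sqrt_le_sqrt h1
  -- Step 2: comparison with the star rule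
  have hrQ : risk P Q ≤ risk P (ruleStar P h smax) :=
    hopt _ (ruleStar_isRule P h smax hP0 hS)
      (by rw [ruleStar_MI P h smax hP0 hS hP1 hdet]; exact hεnn)
  have hrstar := ruleStar_risk P h smax hP0 hS hdet
  have hriskQ : ∑ s, margS P s * TV (condYhatS P Q s) (condYS P s) ≤ risk P Q := by
    rw [risk_eq P Q hQ1]
    exact Finset.sum_le_sum fun s _ => risk_lb P Q hP0 hQ0 hQ1 hS h hdet s
  -- Step 3: per-group triangle inequalities
  have tri : ∀ s, margS P s * TV (condYS P s) (condYS P smax)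
      - margS P s * TV (condYhatS P Q s) (margYhat P Q)
      + (if s = smax then margS P s * t else -(margS P s * t))
      ≤ margS P s * TV (condYhatS P Q s) (condYS P s) := by
    intro s
    have hw := (hS s).le
    by_cases hs : s = smax
    · subst hs
      rw [if_pos rfl, TV_self, mul_zero]
      have h1 : t ≤ TV (margYhat P Q) (condYhatS P Q s) + TV (condYhatS P Q s) (condYS P s) :=
        TV_triangle _ _ _
      have h2 : TV (margYhat P Q) (condYhatS P Q s) = TV (condYhatS P Q s) (margYhat P Q) :=
        TV_symm _ _
      nlinarith [mul_le_mul_of_nonneg_left (h1.trans_eq (by rw [h2])) hw]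
    · rw [if_neg hs]
      have h1 : TV (condYS P s) (condYS P smax)
          ≤ TV (condYS P s) (condYhatS P Q s) + TV (condYhatS P Q s) (margYhat P Q) + t := by
        calc TV (condYS P s) (condYS P smax)
            ≤ TV (condYS P s) (margYhat P Q) + t := TV_triangle _ _ _
          _ ≤ TV (condYS P s) (condYhatS P Q s) + TV (condYhatS P Q s) (margYhat P Q) + t := by
              linarith [TV_triangle (condYS P s) (condYhatS P Q s) (margYhat P Q)]
      have h2 : TV (condYS P s) (condYhatS P Q s) = TV (condYhatS P Q s) (condYS P s) :=
        TV_symm _ _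
      rw [h2] at h1
      nlinarith [mul_le_mul_of_nonneg_left h1 hw]
  -- Step 4: sum the triangle bounds to get 2δt ≤ A
  have hsum_ite : ∑ s, (if s = smax then margS P s * t else -(margS P s * t))
      = 2 * δ * t := by
    have e : ∀ s : 𝒮, (if s = smax then margS P s * t else -(margS P s * t))
        = (if s = smax then 2 * (margS P s * t) else 0) - margS P s * t := by
      intro s; split <;> ring
    simp_rw [e]
    rw [Finset.sum_sub_distrib, Finset.sum_ite_eq' Finset.univ smax
      (fun s => 2 * (margS P s * t)), if_pos (Finset.mem_univ smax),
      ← Finset.sum_mul, margS_total P hP1, hsmax]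
    ring
  have h2δt : 2 * δ * t ≤ A := by
    have hsum := Finset.sum_le_sum fun s (_ : s ∈ Finset.univ) => tri s
    rw [Finset.sum_add_distrib, Finset.sum_sub_distrib, hsum_ite] at hsum
    have hchain : ∑ s, margS P s * TV (condYhatS P Q s) (condYS P s)
        ≤ ∑ s, margS P s * TV (condYS P s) (condYS P smax) :=
      le_trans hriskQ (le_trans hrQ hrstar)
    linarith
  have htn : 0 ≤ t := TV_nonneg _ _
  have htA : t ≤ A / (2 * δ) := by
    rw [le_div_iff₀ (by positivity)]
    linarith
  -- Step 5: final chain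
  have final1 : ∑ s, margS P s * TV (condYhatS P Q s) (condYS P smax) ≤ A + t := by
    have e : ∀ s, margS P s * TV (condYhatS P Q s) (condYS P smax)
        ≤ margS P s * TV (condYhatS P Q s) (margYhat P Q) + margS P s * t := by
      intro s
      have h1 := TV_triangle (condYhatS P Q s) (margYhat P Q) (condYS P smax)
      nlinarith [mul_le_mul_of_nonneg_left h1 (hS s).le]
    calc ∑ s, margS P s * TV (condYhatS P Q s) (condYS P smax)
        ≤ ∑ s, (margS P s * TV (condYhatS P Q s) (margYhat P Q) + margS P s * t) :=
          Finset.sum_le_sum fun s _ => e s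
      _ = A + t := by
          rw [Finset.sum_add_distrib, ← Finset.sum_mul, margS_total P hP1]
          ring
  have hsqrt : Real.sqrt (ε / 2) = Real.sqrt (2 * ε) / 2 := by
    rw [show ε / 2 = (2 * ε) * (1 / 4) by ring,
      Real.sqrt_mul (by linarith : (0:ℝ) ≤ 2 * ε),
      show Real.sqrt (1 / 4) = 1 / 2 by
        rw [show (1 / 4 : ℝ) = (1 / 2) ^ 2 by norm_num, Real.sqrt_sq (by norm_num)]]
    ring
  calc ∑ s, margS P s * TV (condYhatS P Q s) (condYS P smax)
      ≤ A + t := final1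
    _ ≤ A + A / (2 * δ) := by linarith
    _ = (1 + 1 / (2 * δ)) * A := by ring
    _ ≤ (1 + 1 / (2 * δ)) * Real.sqrt (ε / 2) := by
        have hpos : (0:ℝ) ≤ 1 + 1 / (2 * δ) := by positivity
        exact mul_le_mul_of_nonneg_left hA hpos
    _ = (1 / 2 + 1 / (4 * δ)) * Real.sqrt (2 * ε) := by
        rw [hsqrt]
        field_simp
        ring
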